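/- arXiv:2310.16997 — 5 statements merged into one kernel-verified Lean document; each statement's English description precedes it below -/
import Mathlib

section
/- Let S ∈ ℝ^{n×m} be a partial diagonal matrix with full column rank and set T_j = −sʲ (the negative of the j-th column of S) for each j. Then for every matrix M ∈ ℝ^{n×n}, Proj_{S,T_{1:m}} M = Proj_{S,T_{1:m}} Diag[M_{1,1},…,M_{n,n}]; i.e., the projection of M depends only on the diagonal entries of M. -/
open Matrix

/-- The four Moore–Penrose equations for a pseudoinverse `B` of `A`. -/
def IsMPInv {k l : ℕ} (A : Matrix (Fin k) (Fin l) ℝ) (B : Matrix (Fin l) (Fin k) ℝ) : Prop :=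
  A * B * A = A ∧ B * A * B = B ∧ (A * B)ᵀ = A * B ∧ (B * A)ᵀ = B * A

/-- Let `S ∈ ℝ^{n×m}` be a partial diagonal matrix with full column rank (columns
`sʲ = c_j e^{u_j}`, `c_j ≠ 0`, `u` injective) and take `T_j = −sʲ`.  Then for every
`M ∈ ℝ^{n×n}`, `Proj_{S,T_{1:m}} M = Proj_{S,T_{1:m}} Diag[M_{1,1},…,M_{n,n}]`, where
`Proj_{S,T_{1:m}} M = Σ_j (Sᵀ)† e^j (e^j)ᵀ Sᵀ M T_j T_j†` and the vector pseudoinverse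
is `t† = tᵀ/‖t‖²`. -/
theorem stmt4 {n m : ℕ} (hm : m ≤ n)
    (u : Fin m → Fin n) (hu : Function.Injective u)
    (c : Fin m → ℝ) (hc : ∀ j, c j ≠ 0)
    (S : Matrix (Fin n) (Fin m) ℝ)
    (hS : ∀ i j, S i j = if i = u j then c j else 0)
    (Sp : Matrix (Fin n) (Fin m) ℝ) (hSp : IsMPInv Sᵀ Sp)
    (P : Matrix (Fin n) (Fin n) ℝ → Matrix (Fin n) (Fin n) ℝ)
    (hP : ∀ M, P M = ∑ j, Sp * vecMulVec (Pi.single j (1 : ℝ) : Fin m → ℝ)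
        (Pi.single j (1 : ℝ) : Fin m → ℝ) * Sᵀ * M *
        vecMulVec (-(fun i => S i j)) ((∑ i, (S i j) ^ 2)⁻¹ • (-(fun i => S i j)))) :
    ∀ M : Matrix (Fin n) (Fin n) ℝ, P M = P (Matrix.diagonal fun i => M i i) := by
  have key : ∀ (N : Matrix (Fin n) (Fin n) ℝ) (j : Fin m),
      (vecMulVec (Pi.single j (1 : ℝ) : Fin m → ℝ) (Pi.single j (1 : ℝ) : Fin m → ℝ)) *
        (Sᵀ * (N * vecMulVec (-(fun i => S i j)) ((∑ i, (S i j) ^ 2)⁻¹ • (-(fun i => S i j)))))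
      = N (u j) (u j) • vecMulVec (Pi.single j (1 : ℝ) : Fin m → ℝ)
          ((c j)^2 • ((∑ i, (S i j) ^ 2)⁻¹ • (fun i => S i j))) := by
    intro N j
    ext a b
    simp only [Matrix.mul_apply, vecMulVec_apply, Pi.single_apply, Pi.smul_apply,
      smul_eq_mul, Matrix.smul_apply, Pi.neg_apply, transpose_apply, hS]
    simp [Finset.mul_sum, Finset.sum_mul, mul_ite, ite_mul, Finset.sum_ite_eq',
      Finset.sum_ite_eq]
    split_ifs <;> ring
  intro M
  rw [hP, hP]
  refine Finset.sum_congr rfl fun j _ => ?_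
  simp only [Matrix.mul_assoc]
  rw [key M j, key (Matrix.diagonal fun i => M i i) j]
  simp
end

section
/- Let f: ℝ^n → ℝ be C³ on an open ball B(x⁰; Δ̄) with ∇²f Lipschitz with constant L on the closed ball, and let s, t ∈ ℝ^n with x⁰+s, x⁰+t, x⁰+s+t in the ball and ‖s‖+‖t‖ ≤ Δ̄. Then |f(x⁰+s+t) − f(x⁰+s) − f(x⁰+t) + f(x⁰) − sᵀ∇²f(x⁰)t| ≤ (1/6)L(‖s+t‖³ + ‖s‖³ + ‖t‖³). -/
open Metric Set

/-- 1-D second order Taylor estimate with Lipschitz-type bound on the second derivative. -/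
lemma taylor1D {g g' g'' : ℝ → ℝ} {C : ℝ}
    (hg : ∀ τ ∈ Icc (0:ℝ) 1, HasDerivAt g (g' τ) τ)
    (hg' : ∀ τ ∈ Icc (0:ℝ) 1, HasDerivAt g' (g'' τ) τ)
    (hbound : ∀ τ ∈ Icc (0:ℝ) 1, |g'' τ - g'' 0| ≤ C * τ) :
    |g 1 - g 0 - g' 0 - g'' 0 / 2| ≤ C / 6 := by
  -- Step 1: bound |g' τ - g' 0 - τ * g'' 0| ≤ C * τ^2 / 2
  set φ : ℝ → ℝ := fun τ => g' τ - g' 0 - τ * g'' 0 with hφdef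
  have hφ : ∀ τ ∈ Icc (0:ℝ) 1, HasDerivAt φ (g'' τ - g'' 0) τ := by
    intro τ hτ
    exact ((hg' τ hτ).sub_const (g' 0)).sub (hasDerivAt_mul_const (g'' 0))
  have S1 : ∀ τ ∈ Icc (0:ℝ) 1, ‖φ τ‖ ≤ C * τ ^ 2 / 2 := by
    have hcont : ContinuousOn φ (Icc (0:ℝ) 1) :=
      fun τ hτ => (hφ τ hτ).continuousAt.continuousWithinAt
    have hder : ∀ x ∈ Ico (0:ℝ) 1, HasDerivWithinAt φ (g'' x - g'' 0) (Ici x) x :=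
      fun x hx => (hφ x (Ico_subset_Icc_self hx)).hasDerivWithinAt
    have ha : ‖φ 0‖ ≤ C * (0:ℝ) ^ 2 / 2 := by simp [hφdef]
    have hBd : ∀ x : ℝ, HasDerivAt (fun τ => C * τ ^ 2 / 2) (C * x) x := by
      intro x
      have h := ((hasDerivAt_pow 2 x).const_mul C).div_const 2
      convert h using 1
      · rfl
      · rfl
      push_cast
      ring
    have hbnd : ∀ x ∈ Ico (0:ℝ) 1, ‖g'' x - g'' 0‖ ≤ C * x := by
      intro x hx
      rw [Real.norm_eq_abs]
      exact hbound x (Ico_subset_Icc_self hx)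
    exact image_norm_le_of_norm_deriv_right_le_deriv_boundary hcont hder ha hBd hbnd
  -- Step 2
  set ψ : ℝ → ℝ := fun τ => g τ - g 0 - τ * g' 0 - τ ^ 2 / 2 * g'' 0 with hψdef
  have hψ : ∀ τ ∈ Icc (0:ℝ) 1, HasDerivAt ψ (φ τ) τ := by
    intro τ hτ
    have h2 : HasDerivAt (fun τ : ℝ => τ ^ 2 / 2 * g'' 0) (τ * g'' 0) τ := by
      have := (((hasDerivAt_pow 2 τ)).div_const 2).mul_const (g'' 0)
      convert this using 1
      · rfl
      · rfl
      push_cast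
      ring
    exact (((hg τ hτ).sub_const (g 0)).sub (hasDerivAt_mul_const (g' 0))).sub h2
  have S2 : ∀ τ ∈ Icc (0:ℝ) 1, ‖ψ τ‖ ≤ C * τ ^ 3 / 6 := by
    have hcont : ContinuousOn ψ (Icc (0:ℝ) 1) :=
      fun τ hτ => (hψ τ hτ).continuousAt.continuousWithinAt
    have hder : ∀ x ∈ Ico (0:ℝ) 1, HasDerivWithinAt ψ (φ x) (Ici x) x :=
      fun x hx => (hψ x (Ico_subset_Icc_self hx)).hasDerivWithinAt
    have ha : ‖ψ 0‖ ≤ C * (0:ℝ) ^ 3 / 6 := by simp [hψdef]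
    have hBd : ∀ x : ℝ, HasDerivAt (fun τ => C * τ ^ 3 / 6) (C * x ^ 2 / 2) x := by
      intro x
      have h := ((hasDerivAt_pow 3 x).const_mul C).div_const 6
      convert h using 1
      · rfl
      · rfl
      push_cast
      ring
    have hbnd : ∀ x ∈ Ico (0:ℝ) 1, ‖φ x‖ ≤ C * x ^ 2 / 2 :=
      fun x hx => S1 x (Ico_subset_Icc_self hx)
    exact image_norm_le_of_norm_deriv_right_le_deriv_boundary hcont hder ha hBd hbnd
  have := S2 1 (by norm_num)
  rw [Real.norm_eq_abs] at this
  have he : ψ 1 = g 1 - g 0 - g' 0 - g'' 0 / 2 := by simp [hψdef]; ring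
  rw [he] at this
  linarith

/-- Second-order Taylor remainder along a direction. -/
lemma taylor2D {n : ℕ} (f : EuclideanSpace ℝ (Fin n) → ℝ)
    (x0 d : EuclideanSpace ℝ (Fin n)) (Δ L : ℝ) (hL : 0 ≤ L)
    (hf : ContDiffOn ℝ 3 f (ball x0 Δ))
    (hlip : ∀ x ∈ closedBall x0 Δ, ∀ y ∈ closedBall x0 Δ,
      ‖iteratedFDeriv ℝ 2 f x - iteratedFDeriv ℝ 2 f y‖ ≤ L * ‖x - y‖)
    (hd : x0 + d ∈ ball x0 Δ) :
    |f (x0 + d) - f x0 - fderiv ℝ f x0 d - fderiv ℝ (fderiv ℝ f) x0 d d / 2|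
      ≤ L * ‖d‖ ^ 3 / 6 := by
  have hdlt : ‖d‖ < Δ := by
    have := mem_ball.1 hd
    rwa [dist_eq_norm, add_sub_cancel_left] at this
  set c : ℝ → EuclideanSpace ℝ (Fin n) := fun τ => x0 + τ • d with hcdef
  have hmem : ∀ τ ∈ Icc (0:ℝ) 1, c τ ∈ ball x0 Δ := by
    intro τ hτ
    rw [mem_ball, hcdef]
    simp only [dist_eq_norm, add_sub_cancel_left, norm_smul, Real.norm_eq_abs]
    calc |τ| * ‖d‖ ≤ 1 * ‖d‖ := by
          apply mul_le_mul_of_nonneg_right _ (norm_nonneg d)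
          rw [abs_of_nonneg hτ.1]; exact hτ.2
      _ < Δ := by rwa [one_mul]
  have hdiff : ∀ y ∈ ball x0 Δ, HasFDerivAt f (fderiv ℝ f y) y := by
    intro y hy
    exact ((hf.contDiffAt (isOpen_ball.mem_nhds hy)).differentiableAt
      (by norm_num)).hasFDerivAt
  have hf' : ContDiffOn ℝ 2 (fun y => fderiv ℝ f y) (ball x0 Δ) :=
    hf.fderiv_of_isOpen isOpen_ball (by norm_num)
  have hB : ∀ y ∈ ball x0 Δ, HasFDerivAt (fderiv ℝ f) (fderiv ℝ (fderiv ℝ f) y) y := by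
    intro y hy
    exact ((hf'.contDiffAt (isOpen_ball.mem_nhds hy)).differentiableAt
      (by norm_num)).hasFDerivAt
  have hc : ∀ τ : ℝ, HasDerivAt c d τ := by
    intro τ
    simpa [hcdef] using ((hasDerivAt_id τ).smul_const d).const_add x0
  set g : ℝ → ℝ := fun τ => f (c τ) with hgdef
  set g' : ℝ → ℝ := fun τ => fderiv ℝ f (c τ) d with hg'def
  set g'' : ℝ → ℝ := fun τ => fderiv ℝ (fderiv ℝ f) (c τ) d d with hg''def
  have hg : ∀ τ ∈ Icc (0:ℝ) 1, HasDerivAt g (g' τ) τ := fun τ hτ =>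
    (hdiff (c τ) (hmem τ hτ)).comp_hasDerivAt τ (hc τ)
  have hg' : ∀ τ ∈ Icc (0:ℝ) 1, HasDerivAt g' (g'' τ) τ := by
    intro τ hτ
    have A : HasDerivAt (fun τ => fderiv ℝ f (c τ)) (fderiv ℝ (fderiv ℝ f) (c τ) d) τ :=
      (hB (c τ) (hmem τ hτ)).comp_hasDerivAt τ (hc τ)
    simpa [hg'def, hg''def] using A.clm_apply (hasDerivAt_const τ d)
  have hbound : ∀ τ ∈ Icc (0:ℝ) 1, |g'' τ - g'' 0| ≤ (L * ‖d‖ ^ 3) * τ := by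
    intro τ hτ
    have hc0 : c 0 = x0 := by simp [hcdef]
    have key : g'' τ - g'' 0
        = (iteratedFDeriv ℝ 2 f (c τ) - iteratedFDeriv ℝ 2 f (c 0)) ![d, d] := by
      rw [ContinuousMultilinearMap.sub_apply, iteratedFDeriv_two_apply, iteratedFDeriv_two_apply]
      simp [hg''def]
    rw [key]
    calc ‖(iteratedFDeriv ℝ 2 f (c τ) - iteratedFDeriv ℝ 2 f (c 0)) ![d, d]‖
        ≤ ‖iteratedFDeriv ℝ 2 f (c τ) - iteratedFDeriv ℝ 2 f (c 0)‖ * ∏ i, ‖(![d, d]) i‖ :=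
          ContinuousMultilinearMap.le_opNorm _ _
      _ ≤ (L * ‖c τ - c 0‖) * (‖d‖ * ‖d‖) := by
          apply mul_le_mul
          · exact hlip _ (ball_subset_closedBall (hmem τ hτ))
              _ (ball_subset_closedBall (hmem 0 (by norm_num)))
          · simp [Fin.prod_univ_two]
          · exact Finset.prod_nonneg fun _ _ => norm_nonneg _
          · exact mul_nonneg hL (norm_nonneg _)
      _ = (L * ‖d‖ ^ 3) * τ := by
          have : c τ - c 0 = τ • d := by simp [hcdef]
          rw [this, norm_smul, Real.norm_eq_abs, abs_of_nonneg hτ.1]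
          ring
  have := taylor1D hg hg' hbound
  have e0 : c 0 = x0 := by simp [hcdef]
  have e1 : c 1 = x0 + d := by simp [hcdef]
  simp only [hgdef, hg'def, hg''def, e0, e1] at this
  linarith

/-- Second-order Taylor estimate for the cross difference: if `f` is `C³` on the open
ball `B(x⁰;Δ̄)` with `∇²f` `L`-Lipschitz on the closed ball, and `x⁰+s`, `x⁰+t`,
`x⁰+s+t` lie in the ball with `‖s‖+‖t‖ ≤ Δ̄`, then
`|f(x⁰+s+t) − f(x⁰+s) − f(x⁰+t) + f(x⁰) − sᵀ∇²f(x⁰)t| ≤ (1/6)L(‖s+t‖³+‖s‖³+‖t‖³)`. -/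
theorem stmt9 {n : ℕ} (f : EuclideanSpace ℝ (Fin n) → ℝ)
    (x0 s t : EuclideanSpace ℝ (Fin n)) (Δ L : ℝ) (hΔ : 0 < Δ) (hL : 0 ≤ L)
    (hf : ContDiffOn ℝ 3 f (ball x0 Δ))
    (hlip : ∀ x ∈ closedBall x0 Δ, ∀ y ∈ closedBall x0 Δ,
      ‖iteratedFDeriv ℝ 2 f x - iteratedFDeriv ℝ 2 f y‖ ≤ L * ‖x - y‖)
    (hs : x0 + s ∈ ball x0 Δ) (ht : x0 + t ∈ ball x0 Δ)
    (hst : x0 + s + t ∈ ball x0 Δ) (hsum : ‖s‖ + ‖t‖ ≤ Δ) :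
    |f (x0 + s + t) - f (x0 + s) - f (x0 + t) + f x0 - iteratedFDeriv ℝ 2 f x0 ![s, t]| ≤
      (1 / 6) * L * (‖s + t‖ ^ 3 + ‖s‖ ^ 3 + ‖t‖ ^ 3) := by
  set Df := fderiv ℝ f x0 with hDf
  set B := fderiv ℝ (fderiv ℝ f) x0 with hBdef
  have hdiff : ∀ y ∈ ball x0 Δ, HasFDerivAt f (fderiv ℝ f y) y := by
    intro y hy
    exact ((hf.contDiffAt (isOpen_ball.mem_nhds hy)).differentiableAt
      (by norm_num)).hasFDerivAt
  have hf' : ContDiffOn ℝ 2 (fun y => fderiv ℝ f y) (ball x0 Δ) :=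
    hf.fderiv_of_isOpen isOpen_ball (by norm_num)
  have hB0 : HasFDerivAt (fderiv ℝ f) B x0 := by
    exact ((hf'.contDiffAt (isOpen_ball.mem_nhds (mem_ball_self hΔ))).differentiableAt
      (by norm_num)).hasFDerivAt
  have hsymm : B s t = B t s := by
    have hev : ∀ᶠ y in nhds x0, HasFDerivAt f (fderiv ℝ f y) y := by
      filter_upwards [isOpen_ball.mem_nhds (mem_ball_self hΔ)] with y hy using hdiff y hy
    exact second_derivative_symmetric_of_eventually hev hB0 s t
  have hiFD : iteratedFDeriv ℝ 2 f x0 ![s, t] = B s t := by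
    rw [iteratedFDeriv_two_apply]
    simp [hBdef]
  have e1 := taylor2D f x0 (s + t) Δ L hL hf hlip (by rwa [← add_assoc])
  have e2 := taylor2D f x0 s Δ L hL hf hlip hs
  have e3 := taylor2D f x0 t Δ L hL hf hlip ht
  rw [← hDf, ← hBdef] at e1 e2 e3
  have hadd : B (s + t) (s + t) = B s s + B s t + B t s + B t t := by
    simp only [map_add, ContinuousLinearMap.add_apply]
    ring
  have key : f (x0 + s + t) - f (x0 + s) - f (x0 + t) + f x0 - iteratedFDeriv ℝ 2 f x0 ![s, t]
      = (f (x0 + (s + t)) - f x0 - Df (s + t) - B (s + t) (s + t) / 2)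
        - (f (x0 + s) - f x0 - Df s - B s s / 2)
        - (f (x0 + t) - f x0 - Df t - B t t / 2) := by
    rw [hiFD, ← add_assoc, hadd, map_add, hsymm]
    ring
  rw [key]
  set A1 := f (x0 + (s + t)) - f x0 - Df (s + t) - B (s + t) (s + t) / 2
  set A2 := f (x0 + s) - f x0 - Df s - B s s / 2
  set A3 := f (x0 + t) - f x0 - Df t - B t t / 2
  have habs : |A1 - A2 - A3| ≤ |A1| + |A2| + |A3| := by
    calc |A1 - A2 - A3| ≤ |A1 - A2| + |A3| := abs_sub _ _
      _ ≤ |A1| + |A2| + |A3| := by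
          have := abs_sub A1 A2
          linarith
  have : (1 / 6) * L * (‖s + t‖ ^ 3 + ‖s‖ ^ 3 + ‖t‖ ^ 3)
      = L * ‖s + t‖ ^ 3 / 6 + L * ‖s‖ ^ 3 / 6 + L * ‖t‖ ^ 3 / 6 := by ring
  rw [this]
  linarith
end

section
/- Let f: ℝ^n → ℝ be C⁴ on an open ball containing x⁰ with ∇³f Lipschitz with constant L, and let s ∈ ℝ^n with x⁰ ± s in the ball. Then |f(x⁰+s) + f(x⁰−s) − 2f(x⁰) − sᵀ∇²f(x⁰)s| ≤ (1/12)L‖s‖⁴. -/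
open Metric Set

variable {E F : Type*} [NormedAddCommGroup E] [NormedSpace ℝ E]
  [NormedAddCommGroup F] [NormedSpace ℝ F]

lemma fderiv_comp_const_add' (G : E → F) (x0 y : E) :
    fderiv ℝ (fun z => G (x0 + z)) y = fderiv ℝ G (x0 + y) := by
  by_cases h : DifferentiableAt ℝ G (x0 + y)
  · have h2 : HasFDerivAt (fun z : E => x0 + z) (ContinuousLinearMap.id ℝ E) y :=
      (hasFDerivAt_id y).const_add x0
    have := (h.hasFDerivAt.comp y h2).fderiv
    rw [ContinuousLinearMap.comp_id] at this
    exact this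
  · rw [fderiv_zero_of_not_differentiableAt h, fderiv_zero_of_not_differentiableAt]
    intro hc
    apply h
    have h3 : DifferentiableAt ℝ (fun w : E => -x0 + w) (x0 + y) :=
      (differentiable_id.const_add _).differentiableAt
    have h4 : DifferentiableAt ℝ (fun z => G (x0 + z)) (-x0 + (x0 + y)) := by
      simpa using hc
    have := h4.comp (x0 + y) h3
    simp only [Function.comp_def] at this
    have e : ∀ w : E, x0 + (-x0 + w) = w := fun w => by abel
    simpa [e] using this

lemma iteratedFDeriv_comp_const_add' (G : E → F) (x0 : E) (k : ℕ) (y : E) :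
    iteratedFDeriv ℝ k (fun z => G (x0 + z)) y = iteratedFDeriv ℝ k G (x0 + y) := by
  induction k generalizing y with
  | zero => ext1; simp
  | succ k IH =>
    rw [iteratedFDeriv_succ_eq_comp_left, iteratedFDeriv_succ_eq_comp_left]
    simp only [Function.comp_apply]
    congr 1
    have e1 : iteratedFDeriv ℝ k (fun z => G (x0 + z)) =
        fun y => iteratedFDeriv ℝ k G (x0 + y) := funext IH
    rw [e1, fderiv_comp_const_add' (iteratedFDeriv ℝ k G) x0 y]

lemma aux_taylor (f : E → ℝ) (x0 s : E) (Δ L : ℝ) (hΔ : 0 < Δ) (hL : 0 ≤ L)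
    (hf : ContDiffOn ℝ 4 f (ball x0 Δ))
    (hlip : ∀ x ∈ closedBall x0 Δ, ∀ y ∈ closedBall x0 Δ,
      ‖iteratedFDeriv ℝ 3 f x - iteratedFDeriv ℝ 3 f y‖ ≤ L * ‖x - y‖)
    (hs : x0 + s ∈ ball x0 Δ) :
    |f (x0 + s) - f x0 - iteratedFDeriv ℝ 1 f x0 (fun _ => s)
      - (1/2) * iteratedFDeriv ℝ 2 f x0 (fun _ => s)
      - (1/6) * iteratedFDeriv ℝ 3 f x0 (fun _ => s)| ≤ L * ‖s‖ ^ 4 / 24 := by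
  have hUo : IsOpen (ball x0 Δ) := isOpen_ball
  set f1 : E → ℝ := fun z => f (x0 + z) with hf1def
  set U1 : Set E := (fun z : E => x0 + z) ⁻¹' (ball x0 Δ) with hU1def
  have hU1o : IsOpen U1 := hUo.preimage (continuous_const.add continuous_id)
  have hf1 : ContDiffOn ℝ 4 f1 U1 :=
    hf.comp ((contDiff_const.add contDiff_id).contDiffOn) (fun z hz => hz)
  set Llin : ℝ →L[ℝ] E := ContinuousLinearMap.toSpanSingleton ℝ s with hLdef
  set V : Set ℝ := Llin ⁻¹' U1 with hVdef
  have hVo : IsOpen V := hU1o.preimage Llin.continuous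
  set g : ℝ → ℝ := f1 ∘ Llin with hgdef
  have hgV : ContDiffOn ℝ 4 g V := hf1.comp_continuousLinearMap Llin
  have hmemV : ∀ t : ℝ, t ∈ V ↔ x0 + t • s ∈ ball x0 Δ := by
    intro t
    simp [hVdef, hU1def, hLdef, ContinuousLinearMap.toSpanSingleton_apply]
  have hIccV : Icc (0:ℝ) 1 ⊆ V := by
    intro t ht
    rw [hmemV]
    have hc := convex_ball x0 Δ (mem_ball_self hΔ) hs (sub_nonneg.2 ht.2) ht.1 (by ring)
    have e : (1 - t) • x0 + t • (x0 + s) = x0 + t • s := by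
      rw [smul_add, sub_smul, one_smul]; abel
    rwa [e] at hc
  have hkey : ∀ k : ℕ, k ≤ 4 → ∀ t, t ∈ V →
      iteratedDeriv k g t = iteratedFDeriv ℝ k f (x0 + t • s) (fun _ => s) := by
    intro k hk t ht
    have h1 : iteratedFDeriv ℝ k g t = iteratedFDerivWithin ℝ k g V t :=
      (iteratedFDerivWithin_of_isOpen k hVo ht).symm
    have h2 := Llin.iteratedFDerivWithin_comp_right hf1 hU1o.uniqueDiffOn hVo.uniqueDiffOn
      (x := t) ht (i := k) (by exact_mod_cast hk)
    rw [iteratedDeriv_eq_iteratedFDeriv, h1]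
    rw [show iteratedFDerivWithin ℝ k g V t =
      (iteratedFDerivWithin ℝ k f1 U1 (Llin t)).compContinuousLinearMap fun _ => Llin from h2]
    rw [ContinuousMultilinearMap.compContinuousLinearMap_apply]
    rw [iteratedFDerivWithin_of_isOpen k hU1o ht, hf1def]
    rw [iteratedFDeriv_comp_const_add' f x0 k (Llin t)]
    have e1 : x0 + Llin t = x0 + t • s := by
      rw [hLdef, ContinuousLinearMap.toSpanSingleton_apply]
    have e2 : (fun _ : Fin k => Llin 1) = fun _ : Fin k => s := by
      funext i
      rw [hLdef, ContinuousLinearMap.toSpanSingleton_apply, one_smul]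
    rw [e1, e2]
  have hbound : ∀ t, t ∈ Icc (0:ℝ) 1 → |iteratedDeriv 4 g t| ≤ L * ‖s‖ ^ 4 := by
    intro t ht
    have htV := hIccV ht
    have hcball : x0 + t • s ∈ ball x0 Δ := (hmemV t).1 htV
    rw [hkey 4 le_rfl t htV]
    have hop : ‖iteratedFDeriv ℝ 4 f (x0 + t • s)‖ ≤ L := by
      have hnhds : closedBall x0 Δ ∈ nhds (x0 + t • s) :=
        Filter.mem_of_superset (hUo.mem_nhds hcball) ball_subset_closedBall
      have hlips : LipschitzOnWith (Real.toNNReal L) (iteratedFDeriv ℝ 3 f) (closedBall x0 Δ) := by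
        rw [lipschitzOnWith_iff_norm_sub_le]
        intro x hx y hy
        rw [Real.coe_toNNReal _ hL]
        exact hlip x hx y hy
      have hfd := norm_fderiv_le_of_lipschitzOn ℝ hnhds hlips
      have heq : ‖iteratedFDeriv ℝ 4 f (x0 + t • s)‖ =
          ‖fderiv ℝ (iteratedFDeriv ℝ 3 f) (x0 + t • s)‖ := by
        rw [show (4 : ℕ) = 3 + 1 from rfl, iteratedFDeriv_succ_eq_comp_left]
        exact LinearIsometryEquiv.norm_map _ _
      rw [heq]
      exact hfd.trans_eq (Real.coe_toNNReal _ hL)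
    calc |iteratedFDeriv ℝ 4 f (x0 + t • s) (fun _ => s)|
        ≤ ‖iteratedFDeriv ℝ 4 f (x0 + t • s)‖ * ∏ _i : Fin 4, ‖s‖ :=
          (iteratedFDeriv ℝ 4 f (x0 + t • s)).le_opNorm _
      _ ≤ L * ‖s‖ ^ 4 := by
          rw [Finset.prod_const, Finset.card_univ, Fintype.card_fin]
          exact mul_le_mul_of_nonneg_right hop (by positivity)
  have hkeyI : ∀ k : ℕ, k ≤ 4 → ∀ x, x ∈ Icc (0:ℝ) 1 →
      iteratedDerivWithin k g (Icc 0 1) x = iteratedDeriv k g x := by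
    have HT : HasFTaylorSeriesUpToOn 4 g (ftaylorSeriesWithin ℝ g V) V :=
      hgV.ftaylorSeriesWithin hVo.uniqueDiffOn
    have HT' : HasFTaylorSeriesUpToOn 4 g (ftaylorSeriesWithin ℝ g V) (Icc 0 1) :=
      HT.mono hIccV
    intro k hk x hx
    rw [iteratedDerivWithin_eq_iteratedFDerivWithin, iteratedDeriv_eq_iteratedFDeriv]
    congr 1
    rw [← HT'.eq_iteratedFDerivWithin_of_uniqueDiffOn (by exact_mod_cast hk)
      (uniqueDiffOn_Icc one_pos) hx]
    exact iteratedFDerivWithin_of_isOpen k hVo (hIccV hx)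
  have hg3 : ContDiffOn ℝ 3 g (Icc 0 1) := (hgV.of_le (by norm_num)).mono hIccV
  have hdiff3 : DifferentiableOn ℝ (iteratedDerivWithin 3 g (Icc 0 1)) (Ioo 0 1) := by
    have h1 : DifferentiableOn ℝ (iteratedDerivWithin 3 g V) V :=
      hgV.differentiableOn_iteratedDerivWithin (by norm_num) hVo.uniqueDiffOn
    have h2 : DifferentiableOn ℝ (iteratedDeriv 3 g) V := by
      apply h1.congr
      intro x hx
      rw [iteratedDerivWithin_eq_iteratedFDerivWithin, iteratedDeriv_eq_iteratedFDeriv]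
      congr 1
      exact (iteratedFDerivWithin_of_isOpen 3 hVo hx).symm
    have h3 : DifferentiableOn ℝ (iteratedDeriv 3 g) (Ioo 0 1) :=
      h2.mono (fun x hx => hIccV (Ioo_subset_Icc_self hx))
    refine h3.congr ?_
    intro x hx
    have := hkeyI 3 (by norm_num) x (Ioo_subset_Icc_self hx)
    exact this
  obtain ⟨ξ, hξ, hT⟩ := taylor_mean_remainder_lagrange (n := 3) (x₀ := 0) (x := 1) zero_ne_one
    (by rw [uIcc_of_le zero_le_one]; exact hg3)
    (by rw [uIcc_of_le zero_le_one, uIoo_of_le zero_le_one]; exact hdiff3)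
  rw [uIoo_of_le zero_le_one] at hξ
  rw [uIcc_of_le zero_le_one] at hT
  rw [taylor_within_apply] at hT
  have h0 : (0:ℝ) ∈ Icc (0:ℝ) 1 := by norm_num
  have ek : ∀ k : ℕ, k ≤ 4 →
      iteratedDerivWithin k g (Icc (0:ℝ) 1) 0 = iteratedFDeriv ℝ k f x0 (fun _ => s) := by
    intro k hk
    rw [hkeyI k hk 0 h0, hkey k hk 0 (hIccV h0)]
    norm_num
  have hg1 : g 1 = f (x0 + s) := by
    show f (x0 + (1:ℝ) • s) = f (x0 + s)
    rw [one_smul]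
  have hg0 : iteratedDerivWithin 0 g (Icc (0:ℝ) 1) 0 = f x0 := by
    rw [hkeyI 0 (by norm_num) 0 h0]
    show g 0 = f x0
    show f (x0 + (0:ℝ) • s) = f x0
    rw [zero_smul, add_zero]
  have hξ4 : iteratedDerivWithin 4 g (Icc (0:ℝ) 1) ξ = iteratedDeriv 4 g ξ :=
    hkeyI 4 le_rfl ξ (Ioo_subset_Icc_self hξ)
  rw [Finset.sum_range_succ, Finset.sum_range_succ, Finset.sum_range_succ,
    Finset.sum_range_succ, Finset.sum_range_zero, hξ4, hg0,
    ek 1 (by norm_num), ek 2 (by norm_num), ek 3 (by norm_num), hg1] at hT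
  have habs : |iteratedDeriv 4 g ξ| ≤ L * ‖s‖ ^ 4 := hbound ξ (Ioo_subset_Icc_self hξ)
  have heq : f (x0 + s) - f x0 - iteratedFDeriv ℝ 1 f x0 (fun _ => s)
      - (1/2) * iteratedFDeriv ℝ 2 f x0 (fun _ => s)
      - (1/6) * iteratedFDeriv ℝ 3 f x0 (fun _ => s) = iteratedDeriv 4 g ξ / 24 := by
    rw [eq_div_iff (by norm_num : (24:ℝ) ≠ 0)]
    simp only [smul_eq_mul, Nat.factorial] at hT
    norm_num at hT
    simp only [iteratedFDeriv_one_apply]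
    linarith [hT]
  rw [heq, abs_div, abs_of_pos (by norm_num : (0:ℝ) < 24), div_le_div_iff₀ (by norm_num) (by norm_num)]
  nlinarith [habs]

/-- Centered second-difference estimate: if `f` is `C⁴` on an open ball containing `x⁰`
with `∇³f` `L`-Lipschitz, and `x⁰ ± s` lie in the ball, then
`|f(x⁰+s) + f(x⁰−s) − 2f(x⁰) − sᵀ∇²f(x⁰)s| ≤ (1/12)L‖s‖⁴`. -/
theorem stmt10 {n : ℕ} (f : EuclideanSpace ℝ (Fin n) → ℝ)
    (x0 s : EuclideanSpace ℝ (Fin n)) (Δ L : ℝ) (hΔ : 0 < Δ) (hL : 0 ≤ L)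
    (hf : ContDiffOn ℝ 4 f (ball x0 Δ))
    (hlip : ∀ x ∈ closedBall x0 Δ, ∀ y ∈ closedBall x0 Δ,
      ‖iteratedFDeriv ℝ 3 f x - iteratedFDeriv ℝ 3 f y‖ ≤ L * ‖x - y‖)
    (hs : x0 + s ∈ ball x0 Δ) (hs' : x0 - s ∈ ball x0 Δ) :
    |f (x0 + s) + f (x0 - s) - 2 * f x0 - iteratedFDeriv ℝ 2 f x0 ![s, s]| ≤
      (1 / 12) * L * ‖s‖ ^ 4 := by
  have h1 := aux_taylor f x0 s Δ L hΔ hL hf hlip hs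
  have hs'' : x0 + -s ∈ ball x0 Δ := by rwa [← sub_eq_add_neg]
  have h2 := aux_taylor f x0 (-s) Δ L hΔ hL hf hlip hs''
  rw [← sub_eq_add_neg, norm_neg] at h2
  have hDk : ∀ k : ℕ, iteratedFDeriv ℝ k f x0 (fun _ : Fin k => -s) =
      (-1:ℝ)^k * iteratedFDeriv ℝ k f x0 (fun _ => s) := by
    intro k
    have := (iteratedFDeriv ℝ k f x0).map_smul_univ (fun _ : Fin k => (-1:ℝ)) (fun _ => s)
    simp only [neg_smul, one_smul, Finset.prod_const, Finset.card_univ, Fintype.card_fin,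
      smul_eq_mul] at this
    exact this
  rw [hDk 1, hDk 2, hDk 3] at h2
  norm_num at h2
  rw [show (fderiv ℝ f x0) s = iteratedFDeriv ℝ 1 f x0 (fun _ => s) from
    (iteratedFDeriv_one_apply (𝕜 := ℝ) (f := f) (x := x0) (fun _ => s)).symm] at h2
  have h2v : iteratedFDeriv ℝ 2 f x0 ![s, s] = iteratedFDeriv ℝ 2 f x0 (fun _ => s) := by
    congr 1
    funext i
    fin_cases i <;> rfl
  rw [h2v]
  set D1 := iteratedFDeriv ℝ 1 f x0 (fun _ => s)
  set D2 := iteratedFDeriv ℝ 2 f x0 (fun _ => s)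
  set D3 := iteratedFDeriv ℝ 3 f x0 (fun _ => s)
  have e : f (x0 + s) + f (x0 - s) - 2 * f x0 - D2 =
      (f (x0 + s) - f x0 - D1 - (1/2) * D2 - (1/6) * D3)
      + (f (x0 - s) - f x0 + D1 - (1/2) * D2 + (1/6) * D3) := by ring
  rw [e]
  calc |(f (x0 + s) - f x0 - D1 - (1/2) * D2 - (1/6) * D3)
      + (f (x0 - s) - f x0 + D1 - (1/2) * D2 + (1/6) * D3)|
      ≤ |f (x0 + s) - f x0 - D1 - (1/2) * D2 - (1/6) * D3|
        + |f (x0 - s) - f x0 + D1 - (1/2) * D2 + (1/6) * D3| := abs_add_le _ _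
    _ ≤ L * ‖s‖ ^ 4 / 24 + L * ‖s‖ ^ 4 / 24 := by
        apply add_le_add h1
        convert h2 using 2
    _ = (1/12) * L * ‖s‖ ^ 4 := by ring
end

section
/- Let f(x) be a polynomial of degree at most 2 on ℝ^n with Hessian H, let v ∈ ℝ^n be nonzero, h ≠ 0, and S ∈ ℝ^{n×n} invertible. Then the generalized simplex Hessian with T̄ = hv applied to v recovers the Hessian-vector product exactly: ∇²_s f(x⁰; S, hv) v = H v. -/
open Matrix

/-- Exactness of the generalized simplex Hessian applied to `v` for quadratics:
for `f(x) = c + gᵀx + (1/2)xᵀHx` with `H` symmetric, `v ≠ 0`, `h ≠ 0`, and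
`S ∈ ℝ^{n×n}` invertible, the GSH with `T̄ = hv` (built from the simplex gradients
`∇_s f(y;hv) = ((hv)ᵀ)†(f(y+hv)−f(y))`) satisfies `∇²_s f(x⁰;S,hv) v = Hv`. -/
theorem stmt12 {n : ℕ} (c : ℝ) (g : Fin n → ℝ) (H : Matrix (Fin n) (Fin n) ℝ)
    (hH : Hᵀ = H) (f : (Fin n → ℝ) → ℝ)
    (hf : ∀ x, f x = c + g ⬝ᵥ x + (1 / 2) * (x ⬝ᵥ H.mulVec x))
    (x0 v : Fin n → ℝ) (hv : v ≠ 0) (h : ℝ) (hh : h ≠ 0)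
    (S : Matrix (Fin n) (Fin n) ℝ) (hS : IsUnit S.det)
    (δ : Matrix (Fin n) (Fin n) ℝ)
    (hδ : ∀ j i, δ j i =
      (((f (x0 + (fun i' => S i' j) + h • v) - f (x0 + (fun i' => S i' j)))
          - (f (x0 + h • v) - f x0)) / (h ^ 2 * ∑ k, (v k) ^ 2)) * (h * v i)) :
    ((Sᵀ)⁻¹ * δ).mulVec v = H.mulVec v := by
  have hsym : ∀ y u : Fin n → ℝ, y ⬝ᵥ H.mulVec u = u ⬝ᵥ H.mulVec y := by
    intro y u
    rw [dotProduct_mulVec, dotProduct_comm, ← mulVec_transpose, hH]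
  have hdiff : ∀ y u : Fin n → ℝ,
      f (y + u) - f y = g ⬝ᵥ u + u ⬝ᵥ H.mulVec y + (1 / 2) * (u ⬝ᵥ H.mulVec u) := by
    intro y u
    rw [hf, hf]
    simp only [mulVec_add, dotProduct_add, add_dotProduct]
    rw [hsym y u]
    ring
  have hnv : (∑ k, (v k) ^ 2) ≠ 0 := by
    have : v ⬝ᵥ v ≠ 0 := fun hc => hv (by
      have := (dotProduct_self_eq_zero (v := v)).mp hc
      exact this)
    simpa [dotProduct, pow_two] using this
  -- numerator simplification
  have hnum : ∀ j : Fin n,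
      ((f (x0 + (fun i' => S i' j) + h • v) - f (x0 + (fun i' => S i' j)))
          - (f (x0 + h • v) - f x0))
        = h * ((fun i' => S i' j) ⬝ᵥ H.mulVec v) := by
    intro j
    rw [hdiff (x0 + fun i' => S i' j) (h • v), hdiff x0 (h • v)]
    simp only [mulVec_add, dotProduct_add]
    rw [hsym (h • v) (fun i' => S i' j)]
    simp [mulVec_smul, dotProduct_smul]
  have hδv : δ.mulVec v = Sᵀ.mulVec (H.mulVec v) := by
    ext j
    have e : ∀ i, δ j i * v i
        = ((∑ x, S x j * ∑ y, H x y * v y) / (∑ k, (v k) ^ 2)) * v i ^ 2 := by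
      intro i
      rw [hδ j i, hnum j]
      simp only [dotProduct, mulVec]
      field_simp
    simp only [mulVec, dotProduct, transpose_apply]
    rw [Finset.sum_congr rfl fun i _ => e i, ← Finset.mul_sum,
      div_mul_cancel₀ _ hnv]
  have hST : IsUnit (Sᵀ).det := by rwa [det_transpose]
  rw [← mulVec_mulVec, hδv, mulVec_mulVec, nonsing_inv_mul _ hST, one_mulVec]
end

section
/- Let S ∈ ℝ^{n×m} be a partial diagonal matrix with full column rank, columns sʲ = c_j e^{u_j}, and let W ∈ ℝ^{n×m} have columns sʲ ⊙ sʲ (Hadamard squares). Then (Wᵀ)† ε, where ε_j = f(x⁰+sʲ)+f(x⁰−sʲ)−2f(x⁰), is the vector z ∈ ℝ^n with z_{u_j} = ε_j/c_j² and z_i = 0 for i ∉ {u_1,…,u_m}; moreover z equals the vector of diagonal entries of the generalized centered simplex Hessian ∇²_c f(x⁰;S,T_{1:m}) with T_j = −sʲ. -/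
open Matrix

lemma mp_unique {k l : ℕ} {A : Matrix (Fin k) (Fin l) ℝ} {B C : Matrix (Fin l) (Fin k) ℝ}
    (hB : IsMPInv A B) (hC : IsMPInv A C) : B = C := by
  obtain ⟨hB1, hB2, hB3, hB4⟩ := hB
  obtain ⟨hC1, hC2, hC3, hC4⟩ := hC
  have hAB : A * B = A * C := by
    calc A * B = (A * B)ᵀ := hB3.symm
      _ = Bᵀ * Aᵀ := Matrix.transpose_mul _ _
      _ = Bᵀ * (A * C * A)ᵀ := by rw [hC1]
      _ = Bᵀ * (Aᵀ * (A * C)ᵀ) := by rw [Matrix.transpose_mul]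
      _ = (A * B)ᵀ * (A * C)ᵀ := by simp only [Matrix.transpose_mul, Matrix.mul_assoc]
      _ = (A * B) * (A * C) := by rw [hB3, hC3]
      _ = (A * B * A) * C := by simp only [Matrix.mul_assoc]
      _ = A * C := by rw [hB1]
  have hBA : B * A = C * A := by
    calc B * A = (B * A)ᵀ := hB4.symm
      _ = Aᵀ * Bᵀ := Matrix.transpose_mul _ _
      _ = (A * C * A)ᵀ * Bᵀ := by rw [hC1]
      _ = (C * A)ᵀ * Aᵀ * Bᵀ := by simp only [Matrix.transpose_mul, Matrix.mul_assoc]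
      _ = (C * A)ᵀ * (B * A)ᵀ := by rw [Matrix.mul_assoc, ← Matrix.transpose_mul]
      _ = (C * A) * (B * A) := by rw [hB4, hC4]
      _ = C * (A * B * A) := by simp only [Matrix.mul_assoc]
      _ = C * A := by rw [hB1]
  calc B = B * A * B := hB2.symm
    _ = B * (A * C) := by rw [Matrix.mul_assoc, hAB]
    _ = (C * A) * C := by rw [← Matrix.mul_assoc, hBA]
    _ = C := hC2

/-- generic partial-diagonal pseudoinverse lemma -/
lemma partial_diag_mp {n m : ℕ} (u : Fin m → Fin n) (hu : Function.Injective u)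
    (d : Fin m → ℝ) (hd : ∀ j, d j ≠ 0)
    (A : Matrix (Fin n) (Fin m) ℝ) (hA : ∀ i j, A i j = if i = u j then d j else 0) :
    IsMPInv Aᵀ (Matrix.of fun i j => if i = u j then (d j)⁻¹ else 0) := by
  set B : Matrix (Fin n) (Fin m) ℝ := Matrix.of fun i j => if i = u j then (d j)⁻¹ else 0 with hB
  have h1 : Aᵀ * B = 1 := by
    ext j k
    simp only [Matrix.mul_apply, Matrix.transpose_apply, hA, hB, Matrix.of_apply]
    rw [Finset.sum_eq_single (u j)]
    · by_cases h : j = k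
      · subst h; simp [hd j, Matrix.one_apply]
      · have h' : u j ≠ u k := fun e => h (hu e)
        simp [h', Matrix.one_apply, h]
    · intro i _ hi; simp [hi]
    · simp
  have h2 : (B * Aᵀ)ᵀ = B * Aᵀ := by
    ext i i'
    simp only [Matrix.transpose_apply, Matrix.mul_apply, hA, hB, Matrix.of_apply]
    apply Finset.sum_congr rfl
    intro j _
    by_cases e1 : i = u j <;> by_cases e2 : i' = u j <;> simp [e1, e2, mul_comm]
  refine ⟨?_, ?_, ?_, h2⟩
  · rw [h1, Matrix.one_mul]
  · rw [Matrix.mul_assoc, h1, Matrix.mul_one]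
  · rw [h1, Matrix.transpose_one]
/-- Let `S ∈ ℝ^{n×m}` be a partial diagonal matrix with full column rank, columns
`sʲ = c_j e^{u_j}`, and `W` the matrix of Hadamard squares `sʲ ⊙ sʲ`.  With
`ε_j = f(x⁰+sʲ)+f(x⁰−sʲ)−2f(x⁰)`, the centered simplex Hessian diagonal
`(Wᵀ)† ε` equals the vector `z = Σ_j (ε_j/c_j²) e^{u_j}` (zero outside
`{u_1,…,u_m}`); moreover `z` equals the vector of diagonal entries of the
generalized centered simplex Hessian `∇²_c f(x⁰;S,T_{1:m})` with `T_j = −sʲ`,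
where `∇²_c = (1/2)(∇²_s f(x⁰;S,T_{1:m}) + ∇²_s f(x⁰;−S,−T_{1:m}))`,
`∇²_s f(x⁰;S,T_{1:m}) = (Sᵀ)† δ²` with row `j` of `δ²` given by
`(∇_s f(x⁰+sʲ;T_j) − ∇_s f(x⁰;T_j))ᵀ`, and for a single column `t`,
`∇_s f(y;t) = (tᵀ)†(f(y+t)−f(y)) = ((f(y+t)−f(y))/‖t‖²) t`. -/
theorem stmt15 {n m : ℕ} (hm : m ≤ n)
    (f : (Fin n → ℝ) → ℝ) (x0 : Fin n → ℝ)
    (u : Fin m → Fin n) (hu : Function.Injective u)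
    (c : Fin m → ℝ) (hc : ∀ j, c j ≠ 0)
    (S : Matrix (Fin n) (Fin m) ℝ)
    (hS : ∀ i j, S i j = if i = u j then c j else 0)
    (W : Matrix (Fin n) (Fin m) ℝ) (hW : ∀ i j, W i j = (S i j) ^ 2)
    (ε : Fin m → ℝ)
    (hε : ∀ j, ε j = f (x0 + fun i => S i j) + f (x0 - fun i => S i j) - 2 * f x0)
    (Wp : Matrix (Fin n) (Fin m) ℝ) (hWp : IsMPInv Wᵀ Wp)
    (Sp : Matrix (Fin n) (Fin m) ℝ) (hSp : IsMPInv Sᵀ Sp)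
    (Sp' : Matrix (Fin n) (Fin m) ℝ) (hSp' : IsMPInv (-S)ᵀ Sp')
    (sg : (Fin n → ℝ) → (Fin n → ℝ) → (Fin n → ℝ))
    (hsg : ∀ y t, sg y t = ((f (y + t) - f y) / (∑ i, (t i) ^ 2)) • t)
    (δ1 δ2 : Matrix (Fin m) (Fin n) ℝ)
    (hδ1 : ∀ j i, δ1 j i =
      (sg (x0 + fun i' => S i' j) (-(fun i' => S i' j)) - sg x0 (-(fun i' => S i' j))) i)
    (hδ2 : ∀ j i, δ2 j i =
      (sg (x0 - fun i' => S i' j) (fun i' => S i' j) - sg x0 (fun i' => S i' j)) i)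
    (GCSH : Matrix (Fin n) (Fin n) ℝ)
    (hGCSH : GCSH = (1 / 2 : ℝ) • (Sp * δ1 + Sp' * δ2))
    (z : Fin n → ℝ)
    (hz : z = ∑ j, (ε j / (c j) ^ 2) • (Pi.single (u j) (1 : ℝ) : Fin n → ℝ)) :
    Wp.mulVec ε = z ∧ ∀ i, GCSH i i = z i := by
  classical
  have hcol2 : ∀ j, (∑ i, (S i j) ^ 2) = (c j) ^ 2 := by
    intro j
    simp [hS, apply_ite (· ^ 2)]
  have hW' : ∀ i j, W i j = if i = u j then (c j) ^ 2 else 0 := by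
    intro i j; rw [hW, hS]; split <;> simp
  have hWpEq : Wp = Matrix.of fun i j => if i = u j then ((c j) ^ 2)⁻¹ else 0 :=
    mp_unique hWp (partial_diag_mp u hu _ (fun j => pow_ne_zero 2 (hc j)) W hW')
  have hSpEq : Sp = Matrix.of fun i j => if i = u j then (c j)⁻¹ else 0 :=
    mp_unique hSp (partial_diag_mp u hu _ hc S hS)
  have hSp'Eq : Sp' = Matrix.of fun i j => if i = u j then (-(c j))⁻¹ else 0 :=
    mp_unique hSp' (partial_diag_mp u hu _ (fun j => neg_ne_zero.mpr (hc j)) (-S)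
      (by intro i j; simp only [Matrix.neg_apply, hS]; split <;> simp))
  have hzi : ∀ i, z i = ∑ j, if i = u j then ε j / (c j) ^ 2 else 0 := by
    intro i
    rw [hz]
    simp only [Finset.sum_apply, Pi.smul_apply, Pi.single_apply, smul_eq_mul]
    exact Finset.sum_congr rfl fun j _ => by split <;> simp_all
  have hδ1' : ∀ j i, δ1 j i = (ε j / (c j) ^ 2) * S i j := by
    intro j i
    have hK : (∑ i', ((-(fun i' => S i' j)) i') ^ 2) = (c j) ^ 2 := by
      simp only [Pi.neg_apply, neg_sq]; exact hcol2 j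
    rw [hδ1, Pi.sub_apply, hsg, hsg, hK]
    simp only [Pi.smul_apply, Pi.neg_apply, smul_eq_mul, add_neg_cancel_right,
      ← sub_eq_add_neg]
    rw [hε]
    field_simp
    ring
  have hδ2' : ∀ j i, δ2 j i = -((ε j / (c j) ^ 2) * S i j) := by
    intro j i
    rw [hδ2, Pi.sub_apply, hsg, hsg, hcol2]
    simp only [Pi.smul_apply, smul_eq_mul, sub_add_cancel]
    rw [hε]
    field_simp
    ring
  constructor
  · funext i
    rw [hWpEq]
    simp only [Matrix.mulVec, dotProduct, Matrix.of_apply, hzi]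
    exact Finset.sum_congr rfl fun j _ => by
      split
      · rw [div_eq_inv_mul]
      · simp
  · intro i
    rw [hGCSH, hzi]
    simp only [Matrix.smul_apply, Matrix.add_apply, Matrix.mul_apply, hSpEq, hSp'Eq,
      Matrix.of_apply, hδ1', hδ2', smul_eq_mul]
    rw [← Finset.sum_add_distrib, Finset.mul_sum]
    apply Finset.sum_congr rfl
    intro j _
    rw [hS]
    by_cases h : i = u j
    · simp only [h, if_true, inv_neg, neg_mul_neg]
      have hv : (c j)⁻¹ * (ε j / c j ^ 2 * c j) = ε j / c j ^ 2 := by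
        rw [mul_comm, mul_assoc, mul_inv_cancel₀ (hc j), mul_one]
      rw [hv]; ring
    · simp [h]
end
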